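/- The normalizer in PGL_3(k̄) of the cyclic subgroup generated by the projective transformation [X:Y:Z] ↦ [X:Y:ζ₅Z] (ζ₅ a primitive 5th root of unity) is the subgroup of classes of matrices of block form with a 2×2 invertible block acting on (X,Y) and a nonzero scalar on Z. -/
import Mathlib


open Matrix

/-- The normalizer in `PGL₃(k̄)` of the cyclic subgroup generated by
`[X:Y:Z] ↦ [X:Y:ζ₅Z]` consists exactly of (classes of) matrices of block form with an
invertible `2×2` block acting on `(X,Y)` and a nonzero scalar on `Z`.  Stated at the level of
matrices: an invertible matrix `M` conjugates `diag(1,1,ζ₅)` into the subgroup generated by it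
(up to scalars) if and only if `M` has the indicated block shape. -/
theorem normalizer_of_order_five_diagonal {k : Type*} [Field k] [IsAlgClosed k]
    (hchar : ∀ p : ℕ, CharP k p → p = 0 ∨ 13 < p)
    (ζ : k) (hζ : IsPrimitiveRoot ζ 5)
    (M : Matrix (Fin 3) (Fin 3) k) (hM : IsUnit M) :
    (∃ (c : k) (j : ℕ), c ≠ 0 ∧
        M⁻¹ * Matrix.diagonal ![1, 1, ζ] * M = c • (Matrix.diagonal ![1, 1, ζ]) ^ j) ↔
    (M 0 2 = 0 ∧ M 1 2 = 0 ∧ M 2 0 = 0 ∧ M 2 1 = 0) := by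
  have hdetU : IsUnit M.det := (Matrix.isUnit_iff_isUnit_det M).mp hM
  have hdet : M.det ≠ 0 := hdetU.ne_zero
  have hζ1 : ζ ≠ 1 := hζ.ne_one (by norm_num)
  constructor
  · rintro ⟨c, j, hc, h⟩
    have hMM : M * M⁻¹ = 1 := Matrix.mul_nonsing_inv M hdetU
    have h2 : Matrix.diagonal ![1, 1, ζ] * M = M * (c • (Matrix.diagonal ![1, 1, ζ]) ^ j) := by
      rw [← h, ← Matrix.mul_assoc, ← Matrix.mul_assoc, hMM, Matrix.one_mul]
    have E : ∀ i l, M i l ≠ 0 → ![1, 1, ζ] i = c * ![1, 1, ζ] l ^ j := by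
      intro i l hne
      have := congrFun (congrFun h2 i) l
      rw [Matrix.diagonal_pow] at this
      simp only [Matrix.diagonal_mul, Matrix.mul_smul, Matrix.smul_apply,
        Matrix.mul_diagonal, smul_eq_mul, Pi.pow_apply] at this
      exact mul_right_cancel₀ hne (by linear_combination this)
    -- first: M 0 2 = 0 and M 1 2 = 0
    have hQ : M 0 2 = 0 ∧ M 1 2 = 0 := by
      by_contra hcon
      have hq : c * ζ ^ j = 1 := by
        rcases not_and_or.mp hcon with h' | h'
        · have := E 0 2 (by simpa using h'); simpa using this.symm
        · have := E 1 2 (by simpa using h'); simpa using this.symm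
      have h22 : M 2 2 = 0 := by
        by_contra h'
        have := E 2 2 h'
        simp only [Matrix.cons_val_two, Matrix.tail_cons, Matrix.head_cons] at this
        exact hζ1 (this.trans hq)
      have hr : c = ζ := by
        by_cases h20 : M 2 0 = 0
        · by_cases h21 : M 2 1 = 0
          · exact absurd (by rw [Matrix.det_fin_three]; simp [h20, h21, h22]) hdet
          · have := E 2 1 h21; simpa using this.symm
        · have := E 2 0 h20; simpa using this.symm
      have h00 : M 0 0 = 0 := by
        by_contra h'; have := E 0 0 h'; rw [hr] at this; simp at this; exact hζ1 this.symm
      have h01 : M 0 1 = 0 := by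
        by_contra h'; have := E 0 1 h'; rw [hr] at this; simp at this; exact hζ1 this.symm
      have h10 : M 1 0 = 0 := by
        by_contra h'; have := E 1 0 h'; rw [hr] at this; simp at this; exact hζ1 this.symm
      have h11 : M 1 1 = 0 := by
        by_contra h'; have := E 1 1 h'; rw [hr] at this; simp at this; exact hζ1 this.symm
      exact absurd (by rw [Matrix.det_fin_three]; simp [h00, h01, h10, h11, h22]) hdet
    obtain ⟨h02, h12⟩ := hQ
    refine ⟨h02, h12, ?_⟩
    by_contra hcon
    have hr : c = ζ := by
      rcases not_and_or.mp hcon with h' | h'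
      · have := E 2 0 (by simpa using h'); simpa using this.symm
      · have := E 2 1 (by simpa using h'); simpa using this.symm
    have h00 : M 0 0 = 0 := by
      by_contra h'; have := E 0 0 h'; rw [hr] at this; simp at this; exact hζ1 this.symm
    have h01 : M 0 1 = 0 := by
      by_contra h'; have := E 0 1 h'; rw [hr] at this; simp at this; exact hζ1 this.symm
    exact absurd (by rw [Matrix.det_fin_three]; simp [h00, h01, h02]) hdet
  · rintro ⟨h02, h12, h20, h21⟩
    refine ⟨1, 1, one_ne_zero, ?_⟩
    have hinv : M⁻¹ * M = 1 := Matrix.nonsing_inv_mul M hdetU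
    have hcomm : Matrix.diagonal ![1, 1, ζ] * M = M * Matrix.diagonal ![1, 1, ζ] := by
      ext i l
      rw [Matrix.diagonal_mul, Matrix.mul_diagonal]
      fin_cases i <;> fin_cases l <;>
        simp_all [mul_comm]
    rw [pow_one, one_smul, Matrix.mul_assoc, hcomm, ← Matrix.mul_assoc, hinv, Matrix.one_mul]
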